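/- Let I(n,t) := ⌊n/t⌋^((⌊n/t⌋+1)t − n) · (⌊n/t⌋+1)^(n − ⌊n/t⌋·t) for positive integers t ≤ n. Then every simple graph on n vertices has at most I(n,t) maximal independent sets of size exactly t. -/

import Mathlib

/-- `s` is an independent set of `G`: no two of its vertices are adjacent. -/
def SimpleGraph.IsIndepSet' {V : Type*} (G : SimpleGraph V) (s : Set V) : Prop :=
  ∀ v ∈ s, ∀ w ∈ s, ¬ G.Adj v w

/-- `s` is a maximal independent set of `G`. -/
def SimpleGraph.IsMaxIndepSet {V : Type*} (G : SimpleGraph V) (s : Set V) : Prop :=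
  G.IsIndepSet' s ∧ ∀ t : Set V, G.IsIndepSet' t → s ⊆ t → s = t

/-- Byskov's bound `I(n,t)` on the number of maximal independent sets of size `t`. -/
def numMIS (n t : ℕ) : ℕ :=
  (n / t) ^ ((n / t + 1) * t - n) * (n / t + 1) ^ (n - (n / t) * t)


lemma numMIS_zero (n : ℕ) : numMIS n 0 = 1 := by simp [numMIS]

lemma numMIS_one (n : ℕ) : numMIS n 1 = n := by simp [numMIS]

lemma numMIS_of_lt {n t : ℕ} (h : n < t) : numMIS n t = 0 := by
  rw [numMIS, Nat.div_eq_of_lt h, Nat.zero_pow (by omega), zero_mul]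

lemma multiset_bal (c : ℕ) (s : Multiset ℕ) (h : ∀ x ∈ s, x = c ∨ x = c + 1) :
    s.prod = c ^ (Multiset.card s - s.count (c+1)) * (c+1) ^ (s.count (c+1)) ∧
    s.sum = c * Multiset.card s + s.count (c+1) := by
  induction s using Multiset.induction_on with
  | empty => simp
  | cons a s ih =>
    obtain ⟨ihp, ihs⟩ := ih (fun x hx => h x (Multiset.mem_cons_of_mem hx))
    have hk : s.count (c+1) ≤ Multiset.card s := Multiset.count_le_card _ _
    rcases h a (Multiset.mem_cons_self a s) with h' | h'
    · subst h'
      rw [Multiset.prod_cons, Multiset.sum_cons, Multiset.count_cons_of_ne (by omega),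
        Multiset.card_cons, ihp, ihs]
      constructor
      · rw [show Multiset.card s + 1 - s.count (a+1) = (Multiset.card s - s.count (a+1)) + 1 by omega,
          pow_succ]
        ring
      · ring
    · subst h'
      rw [Multiset.prod_cons, Multiset.sum_cons, Multiset.count_cons_self,
        Multiset.card_cons, ihp, ihs]
      constructor
      · rw [show Multiset.card s + 1 - (s.count (c+1) + 1) = Multiset.card s - s.count (c+1) by omega,
          pow_succ]
        ring
      · ring

lemma prod_le_aux : ∀ (N : ℕ) (s : Multiset ℕ), (s.map (fun a => a*a)).sum ≤ N →
    (∀ a ∈ s, 1 ≤ a) → s.prod ≤ numMIS s.sum (Multiset.card s) := by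
  intro N
  induction N with
  | zero =>
    intro s hm h1
    have hs : s = 0 := by
      rcases Multiset.empty_or_exists_mem s with h | ⟨a, ha⟩
      · exact h
      · exfalso
        have h1a := h1 a ha
        have : a*a ≤ (s.map (fun a => a*a)).sum :=
          Multiset.single_le_sum (fun x hx => Nat.zero_le x) _ (Multiset.mem_map_of_mem _ ha)
        nlinarith
    subst hs; simp [numMIS]
  | succ N ih =>
    intro s hm h1
    by_cases hpair : ∃ a ∈ s, ∃ b ∈ s, a + 2 ≤ b
    · obtain ⟨a, ha, b, hb, hab⟩ := hpair
      obtain ⟨e, rfl⟩ : ∃ e, b = a + 2 + e := ⟨b - (a+2), by omega⟩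
      have hb' : (a+2+e) ∈ s.erase a := (Multiset.mem_erase_of_ne (by omega)).2 hb
      set t : Multiset ℕ := (s.erase a).erase (a+2+e) with ht
      have hs : s = a ::ₘ (a+2+e) ::ₘ t := by
        rw [ht, Multiset.cons_erase hb', Multiset.cons_erase ha]
      have ht1 : ∀ x ∈ t, 1 ≤ x := by
        intro x hx
        exact h1 x (by rw [hs]; exact Multiset.mem_cons_of_mem (Multiset.mem_cons_of_mem hx))
      have hm' : (((a+1) ::ₘ (a+1+e) ::ₘ t).map (fun a => a*a)).sum ≤ N := by
        rw [hs] at hm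
        simp only [Multiset.map_cons, Multiset.sum_cons] at hm ⊢
        nlinarith
      have h1' : ∀ x ∈ (a+1) ::ₘ (a+1+e) ::ₘ t, 1 ≤ x := by
        intro x hx
        rcases Multiset.mem_cons.1 hx with rfl | hx
        · omega
        rcases Multiset.mem_cons.1 hx with rfl | hx
        · omega
        · exact ht1 x hx
      have ihs := ih _ hm' h1'
      have hsum : ((a+1) ::ₘ (a+1+e) ::ₘ t).sum = s.sum := by
        rw [hs]; simp only [Multiset.sum_cons]; omega
      have hcard : Multiset.card ((a+1) ::ₘ (a+1+e) ::ₘ t) = Multiset.card s := by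
        rw [hs]; simp
      rw [hsum, hcard] at ihs
      refine le_trans ?_ ihs
      rw [hs]
      simp only [Multiset.prod_cons]
      have : a * (a+2+e) ≤ (a+1) * (a+1+e) := by nlinarith
      calc a * ((a+2+e) * t.prod) = (a * (a+2+e)) * t.prod := by ring
        _ ≤ ((a+1) * (a+1+e)) * t.prod := Nat.mul_le_mul_right _ this
        _ = (a+1) * ((a+1+e) * t.prod) := by ring
    · push_neg at hpair
      rcases Multiset.empty_or_exists_mem s with rfl | ⟨c0, hc0⟩
      · simp [numMIS]
      have hne : s.toFinset.Nonempty := ⟨c0, Multiset.mem_toFinset.2 hc0⟩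
      set c := s.toFinset.min' hne with hcdef
      have hc : c ∈ s := Multiset.mem_toFinset.1 (s.toFinset.min'_mem hne)
      have hcle : ∀ x ∈ s, c ≤ x := fun x hx => s.toFinset.min'_le x (Multiset.mem_toFinset.2 hx)
      have h2 : ∀ x ∈ s, x = c ∨ x = c + 1 := by
        intro x hx
        have := hpair c hc x hx
        have := hcle x hx
        omega
      obtain ⟨hprod, hsum⟩ := multiset_bal c s h2
      set T := Multiset.card s with hT
      set k := s.count (c+1) with hkdef
      have hkT : k ≤ T := Multiset.count_le_card _ _
      have hc1 : 1 ≤ c := h1 c hc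
      have hkTlt : k < T := by
        rcases eq_or_lt_of_le hkT with heq | h
        · exfalso
          have : ∀ b ∈ s, c + 1 = b := (Multiset.count_eq_card).1 heq
          have := this c hc
          omega
        · exact h
      have hTpos : 0 < T := by omega
      have hdiv : s.sum / T = c := by
        rw [hsum, mul_comm, Nat.mul_add_div hTpos, Nat.div_eq_of_lt hkTlt, add_zero]
      have hsub1 : (c+1) * T - s.sum = T - k := by
        have : (c+1)*T = c*T + T := by ring
        omega
      have hsub2 : s.sum - c * T = k := by omega
      rw [numMIS, hdiv, hsub1, hsub2, hprod]

lemma prod_le_numMIS (s : Multiset ℕ) (h1 : ∀ a ∈ s, 1 ≤ a) :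
    s.prod ≤ numMIS s.sum (Multiset.card s) :=
  prod_le_aux _ s le_rfl h1

lemma exists_witness (n t : ℕ) (ht : 1 ≤ t) (htn : t ≤ n) :
    ∃ s : Multiset ℕ, (∀ a ∈ s, 1 ≤ a) ∧ Multiset.card s = t ∧ s.sum = n ∧
      s.prod = numMIS n t := by
  set q := n / t with hq
  set r := n % t with hr
  have hrt : r < t := Nat.mod_lt _ (by omega)
  have hq1 : 1 ≤ q := (Nat.one_le_div_iff (by omega)).2 htn
  have hdm : t * q + r = n := by rw [hq, hr]; exact Nat.div_add_mod n t
  refine ⟨Multiset.replicate (t - r) q + Multiset.replicate r (q + 1), ?_, ?_, ?_, ?_⟩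
  · intro a ha
    rcases Multiset.mem_add.1 ha with h | h
    · rw [Multiset.eq_of_mem_replicate h]; omega
    · rw [Multiset.eq_of_mem_replicate h]; omega
  · simp [Multiset.card_replicate]; omega
  · rw [Multiset.sum_add, Multiset.sum_replicate, Multiset.sum_replicate, smul_eq_mul, smul_eq_mul]
    have h1 : (t - r) * q + r * q = t * q := by
      rw [← add_mul, Nat.sub_add_cancel hrt.le]
    have h2 : r * (q + 1) = r * q + r := by ring
    omega
  · rw [Multiset.prod_add, Multiset.prod_replicate, Multiset.prod_replicate, numMIS, ← hq]
    have h1 : (q + 1) * t - n = t - r := by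
      have : (q+1)*t = t*q + t := by ring
      omega
    have h2 : n - q * t = r := by
      have : q*t = t*q := by ring
      omega
    rw [h1, h2]

lemma numMIS_mono {m m' : ℕ} (t : ℕ) (h : m ≤ m') : numMIS m t ≤ numMIS m' t := by
  rcases Nat.eq_zero_or_pos t with rfl | ht
  · simp [numMIS_zero]
  rcases lt_or_ge m t with hmt | hmt
  · rw [numMIS_of_lt hmt]; exact Nat.zero_le _
  obtain ⟨s, hs1, hsc, hss, hsp⟩ := exists_witness m t ht hmt
  obtain ⟨a, s', rfl⟩ : ∃ a s', s = a ::ₘ s' := by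
    rcases Multiset.empty_or_exists_mem s with rfl | ⟨a, ha⟩
    · simp at hsc; omega
    · obtain ⟨s', rfl⟩ := Multiset.exists_cons_of_mem ha
      exact ⟨a, s', rfl⟩
  have key := prod_le_numMIS ((a + (m' - m)) ::ₘ s') (by
    intro x hx
    rcases Multiset.mem_cons.1 hx with rfl | hx
    · have := hs1 a (Multiset.mem_cons_self a s'); omega
    · exact hs1 x (Multiset.mem_cons_of_mem hx))
  have hsum' : ((a + (m' - m)) ::ₘ s').sum = m' := by
    rw [Multiset.sum_cons] at hss ⊢; omega
  have hcard' : Multiset.card ((a + (m' - m)) ::ₘ s') = t := by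
    rw [Multiset.card_cons] at hsc ⊢; omega
  rw [hsum', hcard'] at key
  refine le_trans ?_ key
  rw [← hsp, Multiset.prod_cons, Multiset.prod_cons]
  exact Nat.mul_le_mul_right _ (by omega)

lemma numMIS_step {n m t : ℕ} (h : m < n) : (n - m) * numMIS m t ≤ numMIS n (t+1) := by
  rcases Nat.eq_zero_or_pos t with rfl | ht
  · rw [numMIS_zero, numMIS_one]; omega
  rcases lt_or_ge m t with hmt | hmt
  · rw [numMIS_of_lt hmt]; simp
  obtain ⟨s, hs1, hsc, hss, hsp⟩ := exists_witness m t ht hmt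
  have key := prod_le_numMIS ((n - m) ::ₘ s) (by
    intro x hx
    rcases Multiset.mem_cons.1 hx with rfl | hx
    · omega
    · exact hs1 x hx)
  rw [Multiset.sum_cons, Multiset.prod_cons, Multiset.card_cons, hss, hsc, hsp,
    show n - m + m = n from by omega] at key
  exact key

lemma ncard_filter_eq {V : Type*} [Fintype V] (p : Finset V → Prop) [DecidablePred p] :
    {I : Finset V | p I}.ncard = (Finset.univ.filter p).card := by
  classical
  rw [Set.ncard_eq_toFinset_card', Set.toFinset_setOf]

universe u

lemma fixed_vertex_bound {V : Type u} [Fintype V] [DecidableEq V] (G : SimpleGraph V)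
    [DecidableRel G.Adj] (t : ℕ) (u : V)
    [DecidablePred (fun I : Finset V => (G.IsMaxIndepSet ↑I ∧ I.card = t+1) ∧ u ∈ I)]
    (ih : ∀ (W : Type u) [Fintype W] (H : SimpleGraph W),
      {J : Finset W | H.IsMaxIndepSet ↑J ∧ J.card = t}.ncard ≤ numMIS (Fintype.card W) t) :
    (Finset.univ.filter (fun I : Finset V => (G.IsMaxIndepSet ↑I ∧ I.card = t+1) ∧ u ∈ I)).card
      ≤ numMIS (Fintype.card V - (G.degree u + 1)) t := by
  classical
  set Wf : Finset V := (insert u (G.neighborFinset u))ᶜ with hWf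
  have hWmem : ∀ w, w ∈ Wf ↔ (w ≠ u ∧ ¬ G.Adj u w) := by
    intro w
    rw [hWf, Finset.mem_compl, Finset.mem_insert, SimpleGraph.mem_neighborFinset]
    tauto
  have hWfcard : Wf.card = Fintype.card V - (G.degree u + 1) := by
    rw [hWf, Finset.card_compl,
      Finset.card_insert_of_notMem (G.notMem_neighborFinset_self u),
      G.card_neighborFinset_eq_degree]
  set W := {x : V // x ∈ Wf} with hWdef
  set G' : SimpleGraph W := G.comap (fun x => (x : V)) with hG'
  have hcardW : Fintype.card W = Fintype.card V - (G.degree u + 1) := by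
    rw [← hWfcard]; exact Fintype.card_coe Wf
  have hIH := ih W G'
  rw [ncard_filter_eq, hcardW] at hIH
  refine le_trans ?_ hIH
  -- the injection
  set f : Finset V → Finset W := fun I => (I.erase u).subtype (· ∈ Wf) with hf
  -- facts about source elements
  have hsubW : ∀ I : Finset V, G.IsMaxIndepSet ↑I → u ∈ I → ∀ w ∈ I.erase u, w ∈ Wf := by
    intro I hMIS hu w hw
    rw [hWmem]
    refine ⟨Finset.ne_of_mem_erase hw, ?_⟩
    exact hMIS.1 u (by exact_mod_cast hu) w (by exact_mod_cast Finset.mem_of_mem_erase hw)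
  have hfmem : ∀ (I : Finset V) (x : W), x ∈ f I ↔ (x : V) ∈ I.erase u := by
    intro I x; rw [hf]; exact Finset.mem_subtype
  apply Finset.card_le_card_of_injOn f
  · intro I hI
    rw [Finset.mem_coe, Finset.mem_filter] at hI
    obtain ⟨-, ⟨hMIS, hcard⟩, hu⟩ := hI
    rw [Finset.mem_coe, Finset.mem_filter]
    refine ⟨Finset.mem_univ _, ?_, ?_⟩
    · -- MIS of G'
      constructor
      · intro a ha b hb hab
        have ha' : (a : V) ∈ I := Finset.mem_of_mem_erase ((hfmem I a).1 (by exact_mod_cast ha))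
        have hb' : (b : V) ∈ I := Finset.mem_of_mem_erase ((hfmem I b).1 (by exact_mod_cast hb))
        exact hMIS.1 a (by exact_mod_cast ha') b (by exact_mod_cast hb') hab
      · intro T' hT' hsub
        set U : Set V := insert u (Subtype.val '' T') with hU
        have hUind : G.IsIndepSet' U := by
          intro x hx y hy hxy
          rcases Set.mem_insert_iff.1 hx with rfl | ⟨a, haT, rfl⟩
          · rcases Set.mem_insert_iff.1 hy with rfl | ⟨b, hbT, rfl⟩
            · exact G.irrefl hxy
            · exact ((hWmem _).1 b.2).2 hxy
          · rcases Set.mem_insert_iff.1 hy with rfl | ⟨b, hbT, rfl⟩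
            · exact ((hWmem _).1 a.2).2 hxy.symm
            · exact hT' a haT b hbT hxy
        have hIU : (↑I : Set V) ⊆ U := by
          intro x hx
          have hxI : x ∈ I := by exact_mod_cast hx
          by_cases hxu : x = u
          · exact hxu ▸ Set.mem_insert _ _
          · have hxe : x ∈ I.erase u := Finset.mem_erase.2 ⟨hxu, hxI⟩
            have hxW : x ∈ Wf := hsubW I hMIS hu x hxe
            refine Set.mem_insert_of_mem _ ⟨⟨x, hxW⟩, ?_, rfl⟩
            exact hsub (by exact_mod_cast (hfmem I ⟨x, hxW⟩).2 hxe)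
        have hEq := hMIS.2 U hUind hIU
        apply subset_antisymm hsub
        intro b hb
        have hbU : (b : V) ∈ U := Set.mem_insert_of_mem _ ⟨b, hb, rfl⟩
        have hbI : (b : V) ∈ I := by
          have : (b : V) ∈ (↑I : Set V) := hEq ▸ hbU
          exact_mod_cast this
        have hbne : (b : V) ≠ u := ((hWmem _).1 b.2).1
        show b ∈ (↑(f I) : Set W)
        rw [Finset.mem_coe, hfmem]
        exact Finset.mem_erase.2 ⟨hbne, hbI⟩
    · -- card
      have : (I.erase u).filter (· ∈ Wf) = I.erase u :=
        Finset.filter_eq_self.2 (hsubW I hMIS hu)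
      rw [hf]
      simp only
      rw [Finset.card_subtype, this, Finset.card_erase_of_mem hu, hcard]
      omega
  · -- injectivity
    have key : ∀ I ∈ (Finset.univ.filter
        (fun I : Finset V => (G.IsMaxIndepSet ↑I ∧ I.card = t+1) ∧ u ∈ I) : Finset (Finset V)),
        ∀ I' ∈ (Finset.univ.filter
        (fun I : Finset V => (G.IsMaxIndepSet ↑I ∧ I.card = t+1) ∧ u ∈ I) : Finset (Finset V)),
        f I = f I' → I ⊆ I' := by
      intro I hI I' hI' hff x hx
      rw [Finset.mem_filter] at hI hI'
      obtain ⟨-, ⟨hMIS, -⟩, hu⟩ := hI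
      obtain ⟨-, -, hu'⟩ := hI'
      by_cases hxu : x = u
      · exact hxu ▸ hu'
      · have hxe : x ∈ I.erase u := Finset.mem_erase.2 ⟨hxu, hx⟩
        have hxW : x ∈ Wf := hsubW I hMIS hu x hxe
        have : (⟨x, hxW⟩ : W) ∈ f I := (hfmem I _).2 hxe
        rw [hff] at this
        exact Finset.mem_of_mem_erase ((hfmem I' _).1 this)
    intro I hI I' hI' hff
    exact subset_antisymm (key I hI I' hI' hff) (key I' hI' I hI hff.symm)

set_option maxHeartbeats 1000000 in
lemma graph_key (t : ℕ) : ∀ (V : Type u) [Fintype V] (G : SimpleGraph V),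
    {I : Finset V | G.IsMaxIndepSet ↑I ∧ I.card = t}.ncard ≤ numMIS (Fintype.card V) t := by
  induction t with
  | zero =>
    intro V _ G
    rw [numMIS_zero]
    have hsub : {I : Finset V | G.IsMaxIndepSet ↑I ∧ I.card = 0} ⊆ {(∅ : Finset V)} := by
      intro I hI
      simp only [Set.mem_setOf_eq] at hI
      simp [Finset.card_eq_zero.1 hI.2]
    calc {I : Finset V | G.IsMaxIndepSet ↑I ∧ I.card = 0}.ncard
        ≤ ({(∅ : Finset V)} : Set (Finset V)).ncard :=
          Set.ncard_le_ncard hsub (Set.finite_singleton _)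
      _ = 1 := Set.ncard_singleton _
  | succ t ih =>
    intro V _ G
    classical
    set n := Fintype.card V with hn
    rw [ncard_filter_eq]
    set p := fun I : Finset V => G.IsMaxIndepSet ↑I ∧ I.card = t + 1 with hp
    rcases Finset.eq_empty_or_nonempty (Finset.univ.filter p) with hS | hS
    · rw [hS]; simp
    obtain ⟨I₀, hI₀⟩ := hS
    have hI₀' := (Finset.mem_filter.1 hI₀).2
    obtain ⟨v₀, -⟩ := Finset.card_pos.1 (show 0 < I₀.card by rw [hI₀'.2]; omega)
    haveI : Nonempty V := ⟨v₀⟩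
    obtain ⟨v, -, hv⟩ := Finset.exists_min_image Finset.univ (fun w => G.degree w)
      ⟨v₀, Finset.mem_univ _⟩
    set d := G.degree v with hd
    set N : Finset V := insert v (G.neighborFinset v) with hN
    have hNcard : N.card = d + 1 := by
      rw [hN, Finset.card_insert_of_notMem (G.notMem_neighborFinset_self v),
        G.card_neighborFinset_eq_degree]
    have hcover : Finset.univ.filter p ⊆
        N.biUnion (fun u => Finset.univ.filter (fun I : Finset V => p I ∧ u ∈ I)) := by
      intro I hI
      rw [Finset.mem_biUnion]
      have hI' := (Finset.mem_filter.1 hI).2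
      by_contra hne
      push_neg at hne
      have hdisj : ∀ u ∈ N, u ∉ I := by
        intro w hw hwI
        exact hne w hw (Finset.mem_filter.2 ⟨Finset.mem_univ _, hI', hwI⟩)
      have hvI : v ∉ I := hdisj v (Finset.mem_insert_self _ _)
      have hind : G.IsIndepSet' (insert v (↑I : Set V)) := by
        intro x hx y hy hxy
        have hx' : x = v ∨ x ∈ I := by
          rcases Set.mem_insert_iff.1 hx with h | h
          · exact Or.inl h
          · exact Or.inr (by exact_mod_cast h)
        have hy' : y = v ∨ y ∈ I := by
          rcases Set.mem_insert_iff.1 hy with h | h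
          · exact Or.inl h
          · exact Or.inr (by exact_mod_cast h)
        rcases hx' with hxv | hxI
        · rcases hy' with hyv | hyI
          · rw [hxv, hyv] at hxy; exact G.irrefl hxy
          · rw [hxv] at hxy
            exact hdisj y (Finset.mem_insert_of_mem ((G.mem_neighborFinset _ _).2 hxy)) hyI
        · rcases hy' with hyv | hyI
          · rw [hyv] at hxy
            exact hdisj x (Finset.mem_insert_of_mem ((G.mem_neighborFinset _ _).2 hxy.symm)) hxI
          · exact hI'.1.1 x (by exact_mod_cast hxI) y (by exact_mod_cast hyI) hxy
      have hEq := hI'.1.2 _ hind (Set.subset_insert _ _)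
      have : v ∈ (↑I : Set V) := hEq ▸ Set.mem_insert v _
      exact hvI (by exact_mod_cast this)
    have hd1n : d + 1 ≤ n := by
      have := G.degree_lt_card_verts v
      omega
    calc (Finset.univ.filter p).card
        ≤ (N.biUnion (fun u => Finset.univ.filter (fun I : Finset V => p I ∧ u ∈ I))).card :=
          Finset.card_le_card hcover
      _ ≤ ∑ u ∈ N, (Finset.univ.filter (fun I : Finset V => p I ∧ u ∈ I)).card :=
          Finset.card_biUnion_le
      _ ≤ ∑ u ∈ N, numMIS (n - (d + 1)) t := by
          apply Finset.sum_le_sum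
          intro u hu
          refine le_trans (fixed_vertex_bound G t u ih) ?_
          apply numMIS_mono
          have := hv u (Finset.mem_univ u)
          omega
      _ = (d + 1) * numMIS (n - (d + 1)) t := by
          rw [Finset.sum_const, hNcard, smul_eq_mul]
      _ ≤ numMIS n (t + 1) := by
          have h1 : n - (d + 1) < n := by
            have : 0 < n := Fintype.card_pos
            omega
          have key := numMIS_step (t := t) h1
          have h2 : n - (n - (d + 1)) = d + 1 := by omega
          rw [h2] at key
          exact key

theorem stmt_12 {V : Type*} [Fintype V] (G : SimpleGraph V) (n : ℕ)
    (hn : n = Fintype.card V) (t : ℕ) (ht1 : 1 ≤ t) (htn : t ≤ n) :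
    {I : Finset V | G.IsMaxIndepSet ↑I ∧ I.card = t}.ncard ≤ numMIS n t := by
  rw [hn]
  exact graph_key t V G
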